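/- arXiv:0908.1218 — 3 statements merged into one kernel-verified Lean document; each statement's English description precedes it below -/
import Mathlib

section
/- Let B be an n×n matrix over a commutative ring R. Define B₊ as the upper triangular matrix with (B₊)_{ij} = B_{ij} for i<j, 1 for i=j, 0 otherwise, and B₋ as the matrix with (B₋)_{ij} = B_{ji} for i<j, B_{ii}−1 for i=j, 0 otherwise. For each 1≤i≤n define the matrix r^B_i by (r^B_i)_{st} = δ_{st} − δ_{si}B_{it}. Then −B₊⁻¹ · B₋ᵀ = r^B_1 · r^B_2 · ⋯ · r^B_n. -/
open Matrix

/-- The matrix `r^B_i`: the identity matrix with the `i`-th row of `B` subtracted,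
i.e. `(r^B_i)_{st} = δ_{st} - δ_{si} B_{it}`. -/
def reflMat {n : ℕ} {R : Type*} [CommRing R] (B : Matrix (Fin n) (Fin n) R) (i : Fin n) :
    Matrix (Fin n) (Fin n) R :=
  Matrix.of fun s t => (if s = t then (1 : R) else 0) - (if s = i then B i t else 0)

/-- The upper triangular part `B₊` of `B`, with ones on the diagonal. -/
def upperPart {n : ℕ} {R : Type*} [CommRing R] (B : Matrix (Fin n) (Fin n) R) :
    Matrix (Fin n) (Fin n) R :=
  Matrix.of fun i j => if i < j then B i j else if i = j then 1 else 0

/-- The lower triangular part `B₋` of `B` (transposed to an upper triangular matrix),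
with `B_{ii} - 1` on the diagonal. -/
def lowerPart {n : ℕ} {R : Type*} [CommRing R] (B : Matrix (Fin n) (Fin n) R) :
    Matrix (Fin n) (Fin n) R :=
  Matrix.of fun i j => if i < j then B j i else if i = j then B i i - 1 else 0

lemma key {n : ℕ} {R : Type*} [CommRing R] (B : Matrix (Fin n) (Fin n) R) :
    ∀ k, k ≤ n → upperPart B * ((List.ofFn fun i : Fin n => reflMat B i).take k).prod =
      Matrix.of (fun s t : Fin n => if (s : ℕ) < k then -((lowerPart B)ᵀ s t) else upperPart B s t) := by
  intro k
  induction k with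
  | zero => intro _; ext s t; simp
  | succ k ih =>
    intro hk
    have hkn : k < n := hk
    have hlen : k < (List.ofFn fun i : Fin n => reflMat B i).length := by
      simpa using hkn
    rw [List.prod_take_succ _ _ hlen, ← mul_assoc, ih (le_of_lt hkn)]
    have hget : (List.ofFn fun i : Fin n => reflMat B i)[k] = reflMat B ⟨k, hkn⟩ := by
      simp [List.getElem_ofFn]
    rw [hget]
    ext s t
    have hsum : ∀ (M : Matrix (Fin n) (Fin n) R),
        (M * reflMat B ⟨k, hkn⟩) s t = M s t - M s ⟨k, hkn⟩ * B ⟨k, hkn⟩ t := by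
      intro M
      simp [Matrix.mul_apply, reflMat, mul_sub, Finset.sum_sub_distrib, mul_ite,
        Finset.sum_ite_eq', Finset.sum_ite_eq]
    rw [hsum]
    simp only [Matrix.of_apply, Matrix.transpose_apply]
    rcases lt_trichotomy (s : ℕ) k with h | h | h
    · have h1 : (s : ℕ) < k + 1 := by omega
      have h2 : ¬ ((⟨k, hkn⟩ : Fin n) < s) := by simp [Fin.lt_def]; omega
      have h3 : (⟨k, hkn⟩ : Fin n) ≠ s := by simp [Fin.ext_iff]; omega
      simp [h, h1, lowerPart, h2, h3]
    · have hs : s = (⟨k, hkn⟩ : Fin n) := Fin.ext h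
      rw [← hs]
      have h1 : ¬ ((s : ℕ) < k) := by omega
      have h2 : (s : ℕ) < k + 1 := by omega
      simp only [h1, if_false, h2, if_true]
      rcases lt_trichotomy t s with ht | ht | ht
      · have h3 : ¬ s < t := not_lt_of_gt ht
        have h4 : s ≠ t := ne_of_gt ht
        have h5 : t ≠ s := ne_of_lt ht
        simp [upperPart, lowerPart, h3, h4, ht, h5]
      · subst ht
        simp [upperPart, lowerPart]
      · have h4 : ¬ t < s := not_lt_of_gt ht
        have h5 : t ≠ s := ne_of_gt ht
        simp [upperPart, lowerPart, ht, h4, h5]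
    · have h1 : ¬ (s : ℕ) < k := by omega
      have h2 : ¬ (s : ℕ) < k + 1 := by omega
      have h3 : ¬ s < (⟨k, hkn⟩ : Fin n) := by simp [Fin.lt_def]; omega
      have h4 : s ≠ (⟨k, hkn⟩ : Fin n) := by simp [Fin.ext_iff]; omega
      simp [h1, h2, upperPart, h3, h4]

/-- `-B₊⁻¹ ⬝ B₋ᵀ = r^B_1 ⬝ r^B_2 ⬝ ⋯ ⬝ r^B_n`. -/
theorem neg_upperPart_inv_mul_lowerPart_transpose_eq_prod_reflMat
    {n : ℕ} {R : Type*} [CommRing R] (B : Matrix (Fin n) (Fin n) R) :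
    -((upperPart B)⁻¹ * (lowerPart B)ᵀ) =
      (List.ofFn fun i : Fin n => reflMat B i).prod := by
  have hmain : upperPart B * (List.ofFn fun i : Fin n => reflMat B i).prod =
      -(lowerPart B)ᵀ := by
    have := key B n le_rfl
    rw [List.take_of_length_le (by simp)] at this
    rw [this]
    ext s t
    simp [s.isLt]
  have hdet : IsUnit (upperPart B).det := by
    have htri : (upperPart B).BlockTriangular id := by
      intro i j hij
      simp only [upperPart, Matrix.of_apply]
      have h1 : ¬ i < j := not_lt_of_gt hij
      have h2 : i ≠ j := ne_of_gt hij
      simp [h1, h2]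
    rw [Matrix.det_of_upperTriangular htri]
    simp [upperPart]
  haveI := (upperPart B).invertibleOfIsUnitDet hdet
  calc -((upperPart B)⁻¹ * (lowerPart B)ᵀ)
      = (upperPart B)⁻¹ * -(lowerPart B)ᵀ := by rw [Matrix.mul_neg]
    _ = (upperPart B)⁻¹ * (upperPart B * (List.ofFn fun i : Fin n => reflMat B i).prod) := by
        rw [hmain]
    _ = _ := Matrix.inv_mul_cancel_left_of_invertible _ _
end

section
/- Let C be an n×n upper triangular matrix over a commutative ring with ones on its main diagonal, and let B = C + Cᵀ be its symmetrization. Then −C⁻¹ Cᵀ = r^B_1 · r^B_2 · ⋯ · r^B_n, where (r^B_i)_{st} = δ_{st} − δ_{si}B_{it}. -/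
open Matrix

lemma mul_reflMat {n : ℕ} {R : Type*} [CommRing R]
    (M B : Matrix (Fin n) (Fin n) R) (i : Fin n) :
    M * reflMat B i = Matrix.of fun s t => M s t - M s i * B i t := by
  ext s t
  simp [reflMat, Matrix.mul_apply, mul_sub, Finset.sum_sub_distrib, mul_ite, mul_one, mul_zero]

/-- Partial "projection times B" matrix. -/
def projB {n : ℕ} {R : Type*} [CommRing R] (B : Matrix (Fin n) (Fin n) R) (k : ℕ) :
    Matrix (Fin n) (Fin n) R :=
  Matrix.of fun s t => if (s : ℕ) < k then B s t else 0

/-- For `C` upper triangular with ones on the diagonal and `B = C + Cᵀ` its symmetrization,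
`-C⁻¹ Cᵀ = r^B_1 ⋯ r^B_n`. -/
theorem neg_inv_mul_transpose_eq_prod_reflMat
    {n : ℕ} {R : Type*} [CommRing R] (C : Matrix (Fin n) (Fin n) R)
    (hdiag : ∀ i, C i i = 1) (hupper : ∀ i j : Fin n, j < i → C i j = 0) :
    -(C⁻¹ * Cᵀ) = (List.ofFn fun i : Fin n => reflMat (C + Cᵀ) i).prod := by
  set B : Matrix (Fin n) (Fin n) R := C + Cᵀ with hB
  set L : List (Matrix (Fin n) (Fin n) R) := List.ofFn fun i : Fin n => reflMat B i with hL
  -- column lemma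
  have hcol : ∀ (k : Fin n) (s : Fin n),
      C s k - (if (s : ℕ) < (k : ℕ) then B s k else 0) = if s = k then 1 else 0 := by
    intro k s
    rcases lt_trichotomy s k with h | h | h
    · have hsk : (s : ℕ) < (k : ℕ) := h
      simp only [if_pos hsk, if_neg (Fin.ne_of_lt h)]
      have : B s k = C s k := by
        simp [hB, Matrix.transpose_apply, hupper k s h]
      rw [this]; ring
    · subst h
      simp [hdiag s]
    · have hsk : ¬ (s : ℕ) < (k : ℕ) := not_lt.mpr (le_of_lt h)
      simp [hsk, Fin.ne_of_gt h, hupper s k h]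
  -- main induction
  have key : ∀ k : ℕ, k ≤ n → C * (L.take k).prod = C - projB B k := by
    intro k
    induction k with
    | zero =>
      intro _
      ext s t
      simp [projB]
    | succ k ih =>
      intro hk
      have hkn : k < n := hk
      have hlen : k < L.length := by simpa [hL] using hkn
      rw [List.prod_take_succ L k hlen, ← mul_assoc, ih (le_of_lt hkn)]
      have hget : L[k]'hlen = reflMat B ⟨k, hkn⟩ := by
        simp [hL]
      rw [hget, mul_reflMat]
      ext s t
      have hc : (C - projB B k) s ⟨k, hkn⟩ = if s = ⟨k, hkn⟩ then 1 else 0 := by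
        simpa [projB] using hcol ⟨k, hkn⟩ s
      simp only [Matrix.of_apply, Matrix.sub_apply, hc]
      by_cases hs : s = (⟨k, hkn⟩ : Fin n)
      · subst hs
        simp [projB, hdiag]
      · have hsk : (s : ℕ) ≠ k := by
          intro h; exact hs (Fin.ext h)
        have hiff : ((s : ℕ) < k + 1) ↔ ((s : ℕ) < k) := by omega
        have h0 : C s ⟨k, hkn⟩ - (if (s : ℕ) < k then B s ⟨k, hkn⟩ else 0) = 0 := by
          simpa [hs] using hcol ⟨k, hkn⟩ s
        simp [projB, hs, hiff, h0, show (s : ℕ) ≤ k ↔ (s : ℕ) < k by omega]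
  have hfull : C * L.prod = -Cᵀ := by
    have htake : L.take n = L := by
      apply List.take_of_length_le
      simp [hL]
    have := key n le_rfl
    rw [htake] at this
    rw [this]
    ext s t
    simp [projB, s.isLt, hB]
  -- invertibility of C
  have hdet : C.det = 1 := by
    have hbt : C.BlockTriangular id := fun i j hij => hupper i j hij
    rw [Matrix.det_of_upperTriangular hbt]
    simp [hdiag]
  have hinv : C⁻¹ * C = 1 := Matrix.nonsing_inv_mul C (by simp [hdet])
  calc -(C⁻¹ * Cᵀ) = C⁻¹ * (-Cᵀ) := by rw [Matrix.mul_neg]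
    _ = C⁻¹ * (C * L.prod) := by rw [hfull]
    _ = (C⁻¹ * C) * L.prod := by rw [mul_assoc]
    _ = L.prod := by rw [hinv, one_mul]
end

section
/- Let C = [[1,−1,1],[0,1,−1],[0,0,1]] and B = C + Cᵀ, and let r_1, r_3 be the reflection matrices (r^B_i)_{st} = δ_{st} − δ_{si}B_{it}. Then the matrices (r_1ᵀ C r_1)⁻¹ and (r_3ᵀ C r_3)⁻¹ each contain a negative entry; explicitly (r_1ᵀ C r_1)⁻¹ = [[1,0,0],[0,1,1],[−1,0,1]] and (r_3ᵀ C r_3)⁻¹ = [[1,1,0],[0,1,0],[−1,0,1]]. -/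
open Matrix

/-- For `C = [[1,−1,1],[0,1,−1],[0,0,1]]`, `B = C + Cᵀ` and the reflections `r₁, r₃`,
the matrices `(r₁ᵀ C r₁)⁻¹` and `(r₃ᵀ C r₃)⁻¹` are as displayed and each has a
negative entry. -/
theorem example_reflected_euler_forms :
    let C : Matrix (Fin 3) (Fin 3) ℤ := !![1, -1, 1; 0, 1, -1; 0, 0, 1]
    let B := C + Cᵀ
    let r1 := reflMat B 0
    let r3 := reflMat B 2
    (r1ᵀ * C * r1)⁻¹ = !![1, 0, 0; 0, 1, 1; -1, 0, 1] ∧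
    (r3ᵀ * C * r3)⁻¹ = !![1, 1, 0; 0, 1, 0; -1, 0, 1] ∧
    (∃ i j, (r1ᵀ * C * r1)⁻¹ i j < 0) ∧
    (∃ i j, (r3ᵀ * C * r3)⁻¹ i j < 0) := by
  intro C B r1 r3
  have hr1 : r1ᵀ * C * r1 = !![1, 0, 0; -1, 1, -1; 1, 0, 1] := by
    ext i j
    fin_cases i <;> fin_cases j <;>
      simp [r1, reflMat, B, C, Matrix.mul_apply, Fin.sum_univ_three] <;> decide
  have hr3 : r3ᵀ * C * r3 = !![1, -1, 0; 0, 1, 0; 1, -1, 1] := by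
    ext i j
    fin_cases i <;> fin_cases j <;>
      simp [r3, reflMat, B, C, Matrix.mul_apply, Fin.sum_univ_three] <;> decide
  have h1 : (r1ᵀ * C * r1)⁻¹ = !![1, 0, 0; 0, 1, 1; -1, 0, 1] := by
    rw [hr1]
    apply inv_eq_right_inv
    ext i j
    fin_cases i <;> fin_cases j <;>
      simp [Matrix.mul_apply, Fin.sum_univ_three, Matrix.one_apply] <;> decide
  have h3 : (r3ᵀ * C * r3)⁻¹ = !![1, 1, 0; 0, 1, 0; -1, 0, 1] := by
    rw [hr3]
    apply inv_eq_right_inv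
    ext i j
    fin_cases i <;> fin_cases j <;>
      simp [Matrix.mul_apply, Fin.sum_univ_three, Matrix.one_apply]
  exact ⟨h1, h3, ⟨2, 0, by rw [h1]; norm_num; decide⟩, ⟨2, 0, by rw [h3]; norm_num; decide⟩⟩
end
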